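/- Let T ∈ GL(V) be an invertible linear map on a finite-dimensional complex vector space V, let S ∈ GL(V) with S^p = T (a p-th root of T), and let P_p be the cyclic permutation matrix on ℂ^p. Then dim ker(S ⊗ P_p - id) = dim ker(T - id), where S ⊗ P_p acts on V ⊗ ℂ^p. -/

import Mathlib

open Kronecker Matrix

/-- Let `T` be an invertible matrix on `ℂⁿ`, `S` a `(p+1)`-st root of `T` (also invertible),
and `P` the cyclic permutation matrix on `ℂ^(p+1)`.  Then the kernel of `S ⊗ P - id`
(Kronecker product) has the same dimension as the kernel of `T - id`. -/
theorem stmt6 (n p : ℕ) (T S : Matrix (Fin n) (Fin n) ℂ)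
    (hT : IsUnit T) (hS : IsUnit S) (hroot : S ^ (p + 1) = T)
    (P : Matrix (Fin (p + 1)) (Fin (p + 1)) ℂ)
    (hP : P = Matrix.of fun i j => if j = i + 1 then (1 : ℂ) else 0) :
    Module.finrank ℂ (LinearMap.ker (Matrix.toLin' (S ⊗ₖ P - 1))) =
      Module.finrank ℂ (LinearMap.ker (Matrix.toLin' (T - 1))) := by
  classical
  -- compute the action of the Kronecker product
  have hKP : ∀ (x : Fin n × Fin (p+1) → ℂ) (i : Fin n) (j : Fin (p+1)),
      ((S ⊗ₖ P) *ᵥ x) (i, j) = ∑ k, S i k * x (k, j + 1) := by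
    intro x i j
    subst hP
    simp only [Matrix.mulVec, dotProduct, Fintype.sum_prod_type,
      Matrix.kroneckerMap_apply, Matrix.of_apply, mul_ite, mul_one, mul_zero,
      ite_mul, zero_mul]
    refine Finset.sum_congr rfl fun k _ => ?_
    rw [Finset.sum_ite_eq' Finset.univ (j + 1) (fun l => S i k * x (k, l))]
    simp
  -- membership characterization for the big kernel
  have hmem : ∀ x : Fin n × Fin (p+1) → ℂ,
      x ∈ LinearMap.ker (Matrix.toLin' (S ⊗ₖ P - 1)) ↔
        ∀ j : Fin (p+1), (S *ᵥ fun k => x (k, j + 1)) = fun i => x (i, j) := by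
    intro x
    rw [LinearMap.mem_ker, Matrix.toLin'_apply, Matrix.sub_mulVec, Matrix.one_mulVec,
      sub_eq_zero]
    constructor
    · intro h j
      funext i
      have := congrFun h (i, j)
      rw [hKP] at this
      simpa [Matrix.mulVec, dotProduct] using this
    · intro h
      funext q
      obtain ⟨i, j⟩ := q
      rw [hKP]
      have := congrFun (h j) i
      simpa [Matrix.mulVec, dotProduct] using this
  -- the key iteration lemma
  open Fin.NatCast in
  have key : ∀ (x : Fin n × Fin (p+1) → ℂ),
      (∀ j : Fin (p+1), (S *ᵥ fun k => x (k, j + 1)) = fun i => x (i, j)) →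
      ∀ (m : ℕ) (j : Fin (p+1)),
        (fun i => x (i, j)) = S ^ m *ᵥ fun k => x (k, j + (m : Fin (p+1))) := by
    intro x hx m
    induction m with
    | zero => intro j; simp
    | succ m ih =>
      intro j
      have h1 : (fun i => x (i, j)) = S ^ m *ᵥ fun k => x (k, j + (m : Fin (p+1))) := ih j
      rw [h1, ← hx (j + (m : Fin (p+1))), Matrix.mulVec_mulVec, ← pow_succ]
      have : (j + (m : Fin (p+1))) + 1 = j + ((m + 1 : ℕ) : Fin (p+1)) := by
        push_cast
        rw [add_assoc]
      rw [this]
  -- each column is fixed by T, for x in the kernel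
  open Fin.NatCast in
  have hTfix : ∀ (x : Fin n × Fin (p+1) → ℂ),
      (∀ j : Fin (p+1), (S *ᵥ fun k => x (k, j + 1)) = fun i => x (i, j)) →
      ∀ j : Fin (p+1), T *ᵥ (fun i => x (i, j)) = fun i => x (i, j) := by
    intro x hx j
    have := key x hx (p + 1) j
    have hc : ((p + 1 : ℕ) : Fin (p+1)) = 0 := by
      simp [Fin.natCast_self]
    rw [hc, add_zero, hroot] at this
    exact this.symm
  -- each column determined by column 0
  open Fin.NatCast in
  have hcol : ∀ (x : Fin n × Fin (p+1) → ℂ),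
      (∀ j : Fin (p+1), (S *ᵥ fun k => x (k, j + 1)) = fun i => x (i, j)) →
      ∀ j : Fin (p+1),
        (fun i => x (i, j)) = S ^ (p + 1 - (j : ℕ)) *ᵥ fun k => x (k, 0) := by
    intro x hx j
    have h0 : (fun i => x (i, 0)) = S ^ (j : ℕ) *ᵥ fun k => x (k, (0 : Fin (p+1)) + ((j : ℕ) : Fin (p+1))) :=
      key x hx (j : ℕ) 0
    have hj : (0 : Fin (p+1)) + (((j : ℕ) : Fin (p+1))) = j := by
      simp [Fin.cast_val_eq_self]
    rw [hj] at h0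
    rw [h0, Matrix.mulVec_mulVec, ← pow_add]
    have hle : (j : ℕ) ≤ p := Nat.lt_succ_iff.mp j.isLt
    have : p + 1 - (j : ℕ) + (j : ℕ) = p + 1 := by omega
    rw [this, hroot]
    exact (hTfix x hx j).symm
  -- the two linear maps
  set K1 := LinearMap.ker (Matrix.toLin' (S ⊗ₖ P - 1)) with hK1
  set K2 := LinearMap.ker (Matrix.toLin' (T - 1)) with hK2
  have hmem2 : ∀ v : Fin n → ℂ, v ∈ K2 ↔ T *ᵥ v = v := by
    intro v
    rw [hK2, LinearMap.mem_ker, Matrix.toLin'_apply, Matrix.sub_mulVec, Matrix.one_mulVec,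
      sub_eq_zero]
  let F0 : ((Fin n × Fin (p+1)) → ℂ) →ₗ[ℂ] (Fin n → ℂ) :=
    LinearMap.funLeft ℂ ℂ (fun i : Fin n => (i, (0 : Fin (p+1))))
  let G0 : (Fin n → ℂ) →ₗ[ℂ] ((Fin n × Fin (p+1)) → ℂ) :=
    { toFun := fun v => fun q => (S ^ (p + 1 - (q.2 : ℕ)) *ᵥ v) q.1
      map_add' := by intro v w; funext q; simp [Matrix.mulVec_add]
      map_smul' := by intro c v; funext q; simp [Matrix.mulVec_smul] }
  have hF : ∀ x : ((Fin n × Fin (p+1)) → ℂ), x ∈ K1 → F0 x ∈ K2 := by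
    intro x hx
    rw [hmem2]
    exact hTfix x ((hmem x).mp hx) 0
  have hG : ∀ v : (Fin n → ℂ), v ∈ K2 → G0 v ∈ K1 := by
    intro v hv
    rw [hmem2] at hv
    rw [hmem]
    intro j
    show (S *ᵥ fun k => (S ^ (p + 1 - ((j + 1 : Fin (p+1)) : ℕ)) *ᵥ v) k)
        = fun i => (S ^ (p + 1 - (j : ℕ)) *ᵥ v) i
    have hle : (j : ℕ) ≤ p := Nat.lt_succ_iff.mp j.isLt
    rcases lt_or_eq_of_le hle with hlt | heq
    · have hval : ((j + 1 : Fin (p+1)) : ℕ) = (j : ℕ) + 1 := by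
        rw [Fin.val_add_one_of_lt]
        exact Fin.lt_last_iff_ne_last.mpr (by
          intro h
          rw [h] at hlt
          simp [Fin.val_last] at hlt)
      rw [hval]
      have : (fun k => (S ^ (p + 1 - ((j : ℕ) + 1)) *ᵥ v) k) = S ^ (p + 1 - ((j : ℕ) + 1)) *ᵥ v := rfl
      rw [this, Matrix.mulVec_mulVec, ← pow_succ']
      have : (p + 1 - ((j : ℕ) + 1)) + 1 = p + 1 - (j : ℕ) := by omega
      rw [this]
    · have hj : j = Fin.last p := by
        apply Fin.ext
        simp [Fin.val_last, heq.symm]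
      subst hj
      rw [Fin.last_add_one]
      have : (fun k => (S ^ (p + 1 - ((0 : Fin (p+1)) : ℕ)) *ᵥ v) k)
          = S ^ (p + 1) *ᵥ v := by simp
      rw [this, hroot, hv]
      funext i
      simp [Fin.val_last]
  -- build the equivalence
  let F : K1 →ₗ[ℂ] K2 := (F0.comp K1.subtype).codRestrict K2 (fun x => hF x x.2)
  let G : K2 →ₗ[ℂ] K1 := (G0.comp K2.subtype).codRestrict K1 (fun v => hG v v.2)
  have hFG : F.comp G = LinearMap.id := by
    refine LinearMap.ext fun v => Subtype.ext ?_
    have hv : T *ᵥ (v : Fin n → ℂ) = v := (hmem2 v).mp v.2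
    show (fun i => (G0 (v : Fin n → ℂ)) (i, 0)) = (v : Fin n → ℂ)
    funext i
    show (S ^ (p + 1 - ((0 : Fin (p+1)) : ℕ)) *ᵥ (v : Fin n → ℂ)) i = (v : Fin n → ℂ) i
    simp only [Fin.val_zero, Nat.sub_zero, hroot, hv]
  have hGF : G.comp F = LinearMap.id := by
    refine LinearMap.ext fun x => Subtype.ext ?_
    have hx := (hmem x).mp x.2
    show G0 (F0 (x : Fin n × Fin (p+1) → ℂ)) = (x : Fin n × Fin (p+1) → ℂ)
    funext q
    obtain ⟨i, j⟩ := q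
    show (S ^ (p + 1 - (j : ℕ)) *ᵥ fun k => (x : Fin n × Fin (p+1) → ℂ) (k, 0)) i
        = (x : Fin n × Fin (p+1) → ℂ) (i, j)
    exact (congrFun (hcol _ hx j) i).symm
  exact (LinearEquiv.ofLinear F G hFG hGF).finrank_eq
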